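/- Let 0 < ε < 1 and ρ_ε = (ε-1)/(ε+1). For m ∈ ℕ with m ≥ 1, the function μ(s) = 2sin(ms)/(1-ρ_ε^m) solves the integral equation (1/2)μ(s) - ∫_{0}^{2π} K^L(s,t;ε) μ(t) dt = sin(ms) for all s, where K^L(s,t;ε) = -(1/(2π)) ε/(1+ε²+(1-ε²)cos(s+t)). -/

import Mathlib

open Real MeasureTheory

section Aux
open Complex intervalIntegral

lemma Dpos {ρ : ℝ} (hρ : |ρ| < 1) (θ : ℝ) : 0 < 1 - 2*ρ*Real.cos θ + ρ^2 := by
  nlinarith [Real.neg_one_le_cos θ, Real.cos_le_one θ, abs_nonneg ρ, _root_.sq_abs ρ,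
    neg_abs_le ρ, le_abs_self ρ]

lemma cauchyA (ρ : ℝ) (hρ : |ρ| < 1) (m : ℕ) :
    (∮ z in C((0:ℂ), 1), (z - (ρ:ℂ))⁻¹ • (z ^ m / (1 - ρ * z)))
      = (2 * π * Complex.I) * ((ρ:ℂ) ^ m / (1 - (ρ:ℂ)^2)) := by
  have hmem : (ρ:ℂ) ∈ Metric.ball (0:ℂ) 1 := by
    simp [hρ]
  have hd : DiffContOnCl ℂ (fun z : ℂ => z ^ m / (1 - ρ * z)) (Metric.ball 0 1) := by
    apply DifferentiableOn.diffContOnCl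
    rw [closure_ball (0:ℂ) one_ne_zero]
    apply DifferentiableOn.div (differentiableOn_pow m) ((differentiableOn_const _).sub
      ((differentiableOn_const _).mul differentiableOn_id))
    intro z hz
    have hz1 : ‖z‖ ≤ 1 := by simpa using hz
    intro h
    have : ‖(ρ:ℂ) * z‖ < 1 := by
      rw [norm_mul, Complex.norm_real, Real.norm_eq_abs]
      calc |ρ| * ‖z‖ ≤ |ρ| * 1 := by
            exact mul_le_mul_of_nonneg_left hz1 (abs_nonneg ρ)
        _ < 1 := by simpa using hρ
    rw [sub_eq_zero] at h
    rw [← h] at this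
    simp at this
  have := hd.circleIntegral_sub_inv_smul hmem
  rw [this]
  have : (1:ℂ) - ρ * ρ = 1 - (ρ:ℂ)^2 := by ring
  simp [smul_eq_mul, this]



lemma intB (ρ : ℝ) (hρ : |ρ| < 1) (m : ℕ) :
    ∫ θ in (0:ℝ)..(2*π), Complex.exp (m*θ*Complex.I) / ((1 - 2*ρ*Real.cos θ + ρ^2 : ℝ) : ℂ)
      = 2*π*(ρ:ℂ)^m/(1-(ρ:ℂ)^2) := by
  have key := cauchyA ρ hρ m
  rw [circleIntegral] at key
  simp only [deriv_circleMap, circleMap, Complex.ofReal_one, one_mul, zero_add, smul_eq_mul] at key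
  have hpt : ∀ θ : ℝ,
      Complex.exp (θ*Complex.I) * Complex.I *
        ((Complex.exp (θ*Complex.I) - (ρ:ℂ))⁻¹ *
          (Complex.exp (θ*Complex.I) ^ m / (1 - (ρ:ℂ) * Complex.exp (θ*Complex.I))))
      = Complex.I * (Complex.exp (m*θ*Complex.I) / ((1 - 2*ρ*Real.cos θ + ρ^2 : ℝ) : ℂ)) := by
    intro θ
    set e := Complex.exp (θ*Complex.I) with he
    have hene : e ≠ 0 := Complex.exp_ne_zero _
    have habs : ‖e‖ = 1 := by
      rw [he, Complex.norm_exp]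
      simp
    have h1 : e - (ρ:ℂ) ≠ 0 := by
      intro h
      rw [sub_eq_zero] at h
      rw [h] at habs
      simp at habs
      rw [habs] at hρ; linarith
    have h2 : (1:ℂ) - (ρ:ℂ) * e ≠ 0 := by
      intro h
      rw [sub_eq_zero] at h
      have := congrArg (‖·‖) h
      rw [norm_mul, habs, Complex.norm_real, mul_one] at this
      simp at this
      rw [← this] at hρ; linarith
    set DC : ℂ := ((1 - 2*ρ*Real.cos θ + ρ^2 : ℝ) : ℂ) with hDC
    have hD : DC ≠ 0 := by
      rw [hDC]
      exact_mod_cast (Dpos hρ θ).ne'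
    have hem : e ^ m = Complex.exp (m*θ*Complex.I) := by
      rw [he, ← Complex.exp_nat_mul]; ring_nf
    have hcos : Complex.cos (θ:ℂ) = (e + e⁻¹)/2 := by
      rw [Complex.cos, he, ← Complex.exp_neg]
      ring_nf
    have hDC2 : DC = 1 - 2*(ρ:ℂ)*Complex.cos (θ:ℂ) + (ρ:ℂ)^2 := by
      rw [hDC]; push_cast [Complex.ofReal_cos]; ring
    have hkey : (e - (ρ:ℂ)) * (1 - (ρ:ℂ) * e) = e * DC := by
      rw [hDC2, hcos]
      field_simp
      ring
    rw [← hem]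
    have hx : (e - (ρ:ℂ))⁻¹ * (e ^ m / (1 - (ρ:ℂ) * e)) = e ^ m / ((e - (ρ:ℂ)) * (1 - (ρ:ℂ) * e)) := by
      rw [div_eq_mul_inv, div_eq_mul_inv, mul_inv]; ring
    rw [hx, hkey, div_eq_mul_inv, div_eq_mul_inv, mul_inv]
    have hee : e * e⁻¹ = 1 := mul_inv_cancel₀ hene
    linear_combination (Complex.I * e ^ m * DC⁻¹) * hee
  have key2 : ∫ θ in (0:ℝ)..(2*π),
      Complex.I * (Complex.exp (m*θ*Complex.I) / ((1 - 2*ρ*Real.cos θ + ρ^2 : ℝ) : ℂ))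
      = 2 * π * Complex.I * ((ρ:ℂ) ^ m / (1 - (ρ:ℂ)^2)) := by
    rw [← key]
    apply intervalIntegral.integral_congr
    intro θ _
    exact (hpt θ).symm
  rw [intervalIntegral.integral_const_mul] at key2
  apply mul_left_cancel₀ Complex.I_ne_zero
  rw [key2]
  ring


lemma intReal (ρ : ℝ) (hρ : |ρ| < 1) (m : ℕ) :
    ((∫ θ in (0:ℝ)..(2*π), Real.cos (m*θ)/(1 - 2*ρ*Real.cos θ + ρ^2))
        = 2*π*ρ^m/(1-ρ^2)) ∧
    ((∫ θ in (0:ℝ)..(2*π), Real.sin (m*θ)/(1 - 2*ρ*Real.cos θ + ρ^2)) = 0) := by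
  have hρ2 : (1:ℝ) - ρ^2 ≠ 0 := by nlinarith [abs_nonneg ρ, _root_.sq_abs ρ, le_abs_self ρ, neg_abs_le ρ]
  have hDc : Continuous fun θ : ℝ => 1 - 2*ρ*Real.cos θ + ρ^2 := by continuity
  have hDne : ∀ θ : ℝ, 1 - 2*ρ*Real.cos θ + ρ^2 ≠ 0 := fun θ => (Dpos hρ θ).ne'
  have hg : Continuous fun θ : ℝ => Real.cos (m*θ)/(1 - 2*ρ*Real.cos θ + ρ^2) :=
    Continuous.div (by continuity) hDc hDne
  have hh : Continuous fun θ : ℝ => Real.sin (m*θ)/(1 - 2*ρ*Real.cos θ + ρ^2) :=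
    Continuous.div (by continuity) hDc hDne
  have hsplit : ∀ θ : ℝ, Complex.exp (m*θ*Complex.I) / ((1 - 2*ρ*Real.cos θ + ρ^2 : ℝ) : ℂ)
      = ((Real.cos (m*θ)/(1 - 2*ρ*Real.cos θ + ρ^2) : ℝ) : ℂ)
        + Complex.I * ((Real.sin (m*θ)/(1 - 2*ρ*Real.cos θ + ρ^2) : ℝ) : ℂ) := by
    intro θ
    have : ((m:ℂ))*(θ:ℂ) = ((m*θ : ℝ) : ℂ) := by push_cast; ring
    rw [this, Complex.exp_mul_I, ← Complex.ofReal_cos, ← Complex.ofReal_sin]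
    push_cast
    ring
  have key := intB ρ hρ m
  rw [intervalIntegral.integral_congr (fun θ _ => hsplit θ)] at key
  have i1 : IntervalIntegrable
      (fun θ : ℝ => ((Real.cos (m*θ)/(1 - 2*ρ*Real.cos θ + ρ^2) : ℝ) : ℂ)) volume 0 (2*π) :=
    (Complex.continuous_ofReal.comp hg).intervalIntegrable _ _
  have i2 : IntervalIntegrable
      (fun θ : ℝ => Complex.I * ((Real.sin (m*θ)/(1 - 2*ρ*Real.cos θ + ρ^2) : ℝ) : ℂ))
      volume 0 (2*π) :=
    (continuous_const.mul (Complex.continuous_ofReal.comp hh)).intervalIntegrable _ _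
  rw [intervalIntegral.integral_add i1 i2, intervalIntegral.integral_const_mul] at key
  rw [intervalIntegral.integral_ofReal, intervalIntegral.integral_ofReal] at key
  have hrhs : (2*(π:ℂ)*(ρ:ℂ)^m/(1-(ρ:ℂ)^2)) = ((2*π*ρ^m/(1-ρ^2) : ℝ) : ℂ) := by
    push_cast
    ring
  rw [hrhs] at key
  rw [Complex.ext_iff] at key
  simp only [Complex.add_re, Complex.add_im, Complex.ofReal_re, Complex.ofReal_im,
    Complex.mul_re, Complex.mul_im, Complex.I_re, Complex.I_im] at key
  constructor
  · have := key.1; linarith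
  · have := key.2; linarith


end Aux

/-- For `m ≥ 1`, `μ(s) = 2 sin(ms)/(1-ρ_ε^m)` solves
`(1/2)μ(s) - ∫₀^{2π} K^L(s,t;ε) μ(t) dt = sin(ms)`. -/
theorem stmt_4 (ε : ℝ) (hε : 0 < ε) (hε1 : ε < 1) (m : ℕ) (hm : 1 ≤ m) (s : ℝ) :
    (1 / 2) * (2 * Real.sin (m * s) / (1 - ((ε - 1) / (ε + 1)) ^ m)) -
      ∫ t in (0:ℝ)..(2 * π),
        (-(1 / (2 * π)) * ε / (1 + ε ^ 2 + (1 - ε ^ 2) * Real.cos (s + t))) *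
          (2 * Real.sin (m * t) / (1 - ((ε - 1) / (ε + 1)) ^ m))
    = Real.sin (m * s) := by
  have hεp : (0:ℝ) < ε + 1 := by linarith
  set ρ : ℝ := (ε - 1) / (ε + 1) with hρdef
  have hρneg : -1 < ρ := by
    rw [hρdef, lt_div_iff₀ hεp]; linarith
  have hρlt : ρ < 0 := div_neg_of_neg_of_pos (by linarith) hεp
  have hρ : |ρ| < 1 := by
    rw [abs_lt]
    constructor
    · rw [hρdef, lt_div_iff₀ hεp]; linarith
    · linarith
  have hρ2 : (1:ℝ) - ρ^2 ≠ 0 := by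
    nlinarith [_root_.sq_abs ρ, abs_nonneg ρ]
  have hρm : (1:ℝ) - ρ^m ≠ 0 := by
    have : |ρ^m| < 1 := by
      rw [_root_.abs_pow]
      exact pow_lt_one₀ (abs_nonneg ρ) hρ (by omega)
    have := (abs_lt.mp this).2
    linarith
  have hrho2 : 1 - ρ^2 = 4*ε/(ε+1)^2 := by
    rw [hρdef]; field_simp; ring
  have hDne : ∀ θ : ℝ, 1 - 2*ρ*Real.cos θ + ρ^2 ≠ 0 := fun θ => (Dpos hρ θ).ne'
  have hDc : Continuous fun θ : ℝ => 1 - 2*ρ*Real.cos θ + ρ^2 := by fun_prop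
  have h1 : ∀ θ : ℝ, 1 + ε^2 + (1 - ε^2) * Real.cos θ
      = ((ε+1)^2/2) * (1 - 2*ρ*Real.cos θ + ρ^2) := by
    intro θ
    rw [hρdef]
    field_simp
    ring
  obtain ⟨hC, hS⟩ := intReal ρ hρ m
  -- shifted integral
  have hFper : Function.Periodic
      (fun u : ℝ => Real.sin (m*(u-s))/(1 - 2*ρ*Real.cos u + ρ^2)) (2*π) := by
    intro u
    simp only
    rw [show (m:ℝ)*(u + 2*π - s) = (m:ℝ)*(u-s) + m*(2*π) by ring,
      Real.sin_add_nat_mul_two_pi, Real.cos_add_two_pi]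
  have hshift : (∫ t in (0:ℝ)..(2*π), Real.sin (m*t)/(1 - 2*ρ*Real.cos (s+t) + ρ^2))
      = - Real.sin (m*s) * (2*π*ρ^m/(1-ρ^2)) := by
    have e0 : (∫ t in (0:ℝ)..(2*π), Real.sin (m*t)/(1 - 2*ρ*Real.cos (s+t) + ρ^2))
        = ∫ t in (0:ℝ)..(2*π),
            (fun u : ℝ => Real.sin (m*(u-s))/(1 - 2*ρ*Real.cos u + ρ^2)) (s + t) := by
      apply intervalIntegral.integral_congr
      intro t _
      simp only
      congr 2
      ring
    rw [e0, intervalIntegral.integral_comp_add_left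
        (fun u : ℝ => Real.sin (m*(u-s))/(1 - 2*ρ*Real.cos u + ρ^2)) s]
    have := hFper.intervalIntegral_add_eq s 0
    simp only [zero_add, add_zero] at this ⊢
    rw [this]
    have e1 : (∫ u in (0:ℝ)..(2*π), Real.sin (m*(u-s))/(1 - 2*ρ*Real.cos u + ρ^2))
        = ∫ u in (0:ℝ)..(2*π),
            (Real.cos (m*s) * (Real.sin (m*u)/(1 - 2*ρ*Real.cos u + ρ^2))
              - Real.sin (m*s) * (Real.cos (m*u)/(1 - 2*ρ*Real.cos u + ρ^2))) := by
      apply intervalIntegral.integral_congr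
      intro u _
      dsimp only
      rw [show (m:ℝ)*(u-s) = m*u - m*s by ring, Real.sin_sub]
      ring
    rw [e1, intervalIntegral.integral_sub, intervalIntegral.integral_const_mul,
      intervalIntegral.integral_const_mul, hC, hS]
    · ring
    · exact (continuous_const.mul (Continuous.div (by fun_prop) hDc hDne)).intervalIntegrable _ _
    · exact (continuous_const.mul (Continuous.div (by fun_prop) hDc hDne)).intervalIntegrable _ _
  -- main integrand rewriting
  have hmain : (∫ t in (0:ℝ)..(2 * π),
        (-(1 / (2 * π)) * ε / (1 + ε ^ 2 + (1 - ε ^ 2) * Real.cos (s + t))) *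
          (2 * Real.sin (m * t) / (1 - ρ ^ m)))
      = (-(2*ε)/(π*(ε+1)^2*(1-ρ^m))) *
          ∫ t in (0:ℝ)..(2*π), Real.sin (m*t)/(1 - 2*ρ*Real.cos (s+t) + ρ^2) := by
    rw [← intervalIntegral.integral_const_mul]
    apply intervalIntegral.integral_congr
    intro t _
    dsimp only
    rw [h1 (s+t)]
    have hD := hDne (s+t)
    field_simp
  rw [hmain, hshift, hrho2]
  have hπ := Real.pi_ne_zero
  field_simp
  ring
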